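/- Let d ≥ 1 and 0 < σ₁ ≤ σ₂, and let γ:(0,∞)→[0,∞) be measurable with limsup_{R→∞} R^{σ₁} ∫_{{|u| > R}} γ(|u|) du ≤ 1, liminf_{r→0+} r^{σ₂} ∫_{{|u| > r}} γ(|u|) du ≥ 1, and ∫_{{|u| > r}} γ(|u|) du > 0 for every r ∈ (0,1). Then there exists a constant c ≥ 1 such that for every x₀ ∈ ℝ^d and every r ∈ (0,1) there is j₀ ∈ ℕ such that for all integers j ≥ j₀ and all x ∈ B(x₀, r/2): ∫_{{z : |z - x₀| ≥ 2^j r}} γ(|z - x|) dz ≤ c · 2^{-σ₁ j} · ∫_{{z : |z - x₀| ≥ r}} γ(|z - x₀|) dz. -/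

import Mathlib

open MeasureTheory Topology Filter

set_option maxHeartbeats 1000000 in
/-- Estimate (4.11): combining (4.9) and (4.10), there is `c ≥ 1` such that for every
`x₀` and `r ∈ (0,1)` there is `j₀` with, for all `j ≥ j₀` and `x ∈ B(x₀, r/2)`,
`∫_{|z-x₀| ≥ 2^j r} γ(|z-x|) dz ≤ c 2^{-σ₁ j} ∫_{|z-x₀| ≥ r} γ(|z-x₀|) dz`. -/
theorem stmt_13 (d : ℕ) (hd : 1 ≤ d) (σ₁ σ₂ : ℝ) (hσ₁ : 0 < σ₁) (hσ : σ₁ ≤ σ₂)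
    (γ : ℝ → ℝ) (hγm : Measurable γ) (hγnn : ∀ s : ℝ, 0 < s → 0 ≤ γ s)
    (hlimsup : ∀ ε > (0:ℝ), ∀ᶠ R in atTop,
      R ^ σ₁ * (∫ u in {u : EuclideanSpace ℝ (Fin d) | R < ‖u‖}, γ ‖u‖) ≤ 1 + ε)
    (hliminf : ∀ ε > (0:ℝ), ∀ᶠ r in 𝓝[>] (0:ℝ),
      1 - ε ≤ r ^ σ₂ * ∫ u in {u : EuclideanSpace ℝ (Fin d) | r < ‖u‖}, γ ‖u‖)
    (hpos : ∀ r ∈ Set.Ioo (0:ℝ) 1,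
      0 < ∫ u in {u : EuclideanSpace ℝ (Fin d) | r < ‖u‖}, γ ‖u‖) :
    ∃ c : ℝ, 1 ≤ c ∧ ∀ (x₀ : EuclideanSpace ℝ (Fin d)), ∀ r ∈ Set.Ioo (0:ℝ) 1,
      ∃ j₀ : ℕ, ∀ j : ℕ, j₀ ≤ j → ∀ x ∈ Metric.ball x₀ (r / 2),
        (∫ z in {z : EuclideanSpace ℝ (Fin d) | 2 ^ j * r ≤ ‖z - x₀‖}, γ ‖z - x‖) ≤
          c * (2:ℝ) ^ (-(σ₁ * j)) *
            ∫ z in {z : EuclideanSpace ℝ (Fin d) | r ≤ ‖z - x₀‖}, γ ‖z - x₀‖ := by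
  classical
  set E := EuclideanSpace ℝ (Fin d) with hE
  set f : E → ℝ := fun u => γ ‖u‖ with hf
  set T : ℝ → ℝ := fun R => ∫ u in {u : E | R < ‖u‖}, f u with hT
  set T' : ℝ → ℝ := fun R => ∫ u in {u : E | R ≤ ‖u‖}, f u with hT'
  have hfm : Measurable f := hγm.comp measurable_norm
  have msLt : ∀ a : ℝ, MeasurableSet {u : E | a < ‖u‖} := fun a =>
    measurableSet_lt measurable_const measurable_norm
  have msLe : ∀ a : ℝ, MeasurableSet {u : E | a ≤ ‖u‖} := fun a =>
    measurableSet_le measurable_const measurable_norm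
  -- integrability of f on {a < ‖u‖} for a > 0
  have hIntLt : ∀ a : ℝ, 0 < a → IntegrableOn f {u : E | a < ‖u‖} volume := by
    intro a ha
    have h0 : min a (1/2) ∈ Set.Ioo (0:ℝ) 1 := by
      constructor
      · exact lt_min ha (by norm_num)
      · exact lt_of_le_of_lt (min_le_right _ _) (by norm_num)
    have hp := hpos _ h0
    have hI : IntegrableOn f {u : E | min a (1/2) < ‖u‖} volume := by
      by_contra hc
      rw [integral_undef hc] at hp
      exact lt_irrefl _ hp
    exact hI.mono_set (fun u hu => by
      simp only [Set.mem_setOf_eq] at *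
      exact lt_of_le_of_lt (min_le_left _ _) hu)
  have hIntLe : ∀ a : ℝ, 0 < a → IntegrableOn f {u : E | a ≤ ‖u‖} volume := by
    intro a ha
    exact (hIntLt (a/2) (by linarith)).mono_set (fun u hu => by
      simp only [Set.mem_setOf_eq] at *; linarith)
  -- nonnegativity on these sets
  have hnnLt : ∀ a : ℝ, 0 < a → 0 ≤ᵐ[volume.restrict {u : E | a < ‖u‖}] f :=
    fun a ha => ae_restrict_of_forall_mem (msLt a)
      (fun u hu => hγnn _ (lt_trans ha hu))
  have hnnLe : ∀ a : ℝ, 0 < a → 0 ≤ᵐ[volume.restrict {u : E | a ≤ ‖u‖}] f :=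
    fun a ha => ae_restrict_of_forall_mem (msLe a)
      (fun u hu => hγnn _ (lt_of_lt_of_le ha hu))
  -- monotonicity
  have hTmono : ∀ a b : ℝ, 0 < a → a ≤ b → T b ≤ T a := by
    intro a b ha hab
    exact setIntegral_mono_set (hIntLt a ha) (hnnLt a ha)
      (HasSubset.Subset.eventuallyLE (fun u hu => lt_of_le_of_lt hab hu))
  have hTT' : ∀ a : ℝ, 0 < a → T a ≤ T' a := by
    intro a ha
    refine setIntegral_mono_set (hIntLe a ha) (hnnLe a ha)
      (HasSubset.Subset.eventuallyLE (fun u hu => ?_))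
    simp only [Set.mem_setOf_eq] at *
    exact le_of_lt hu
  have hT'nn : ∀ a : ℝ, 0 < a → 0 ≤ T' a := by
    intro a ha
    exact setIntegral_nonneg (msLe a) (fun u hu => hγnn _ (lt_of_lt_of_le ha hu))
  -- translation invariance
  have htrans : ∀ (x : E) (s : Set E),
      (∫ z in (fun z => z - x) ⁻¹' s, f (z - x)) = ∫ u in s, f u := by
    intro x s
    exact (measurePreserving_sub_right volume x).setIntegral_preimage_emb
      (MeasurableEquiv.subRight x).measurableEmbedding f s
  -- RHS equals T' r
  have hRHS : ∀ (x₀ : E) (r : ℝ),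
      (∫ z in {z : E | r ≤ ‖z - x₀‖}, γ ‖z - x₀‖) = T' r := by
    intro x₀ r
    exact htrans x₀ {u : E | r ≤ ‖u‖}
  -- from hlimsup
  obtain ⟨R₀, hR₀⟩ := eventually_atTop.mp (hlimsup 1 one_pos)
  -- from hliminf
  obtain ⟨u₁, hu₁, hIoo⟩ := mem_nhdsGT_iff_exists_Ioo_subset.mp
    (hliminf (1/2) (by norm_num))
  set δ₀ : ℝ := min u₁ 1 with hδ₀def
  have hδ₀pos : 0 < δ₀ := lt_min hu₁ one_pos
  have hδ₀le1 : δ₀ ≤ 1 := min_le_right _ _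
  have hδ₀low : ∀ r : ℝ, 0 < r → r < δ₀ → 1/2 ≤ r ^ σ₂ * T r := by
    intro r h0 h1
    have : r ∈ Set.Ioo (0:ℝ) u₁ := ⟨h0, lt_of_lt_of_le h1 (min_le_left _ _)⟩
    have h := hIoo this
    simp only [Set.mem_setOf_eq] at h
    have he : T r = ∫ u in {u : E | r < ‖u‖}, f u := rfl
    rw [he]
    linarith
  set S : ℝ := T' 1 with hSdef
  set c : ℝ := max (max 1 (4*(4:ℝ) ^ σ₁))
    (if 0 < S then 2*(δ₀/4) ^ (-σ₁)/S else 1) with hcdef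
  have hc1 : (1:ℝ) ≤ c := le_trans (le_max_left _ _) (le_max_left _ _)
  have hcB : 4*(4:ℝ) ^ σ₁ ≤ c := le_trans (le_max_right _ _) (le_max_left _ _)
  refine ⟨c, hc1, ?_⟩
  intro x₀ r hr
  obtain ⟨hr0, hr1⟩ := hr
  -- choose j₀
  obtain ⟨n, hn⟩ := exists_nat_gt (4 * (max R₀ 1) / r)
  refine ⟨n, ?_⟩
  intro j hj x hx
  have h2j1 : (1:ℝ) ≤ 2 ^ j := one_le_pow₀ (by norm_num)
  have hRj : max R₀ 1 < 2 ^ j * r / 4 := by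
    have h1 : (n:ℝ) ≤ 2 ^ j := by
      calc (n:ℝ) ≤ (2^n : ℕ) := by exact_mod_cast (Nat.lt_two_pow_self (n := n)).le
        _ ≤ ((2^j : ℕ) : ℝ) := by exact_mod_cast Nat.pow_le_pow_right (by norm_num) hj
        _ = 2 ^ j := by push_cast; ring
    have h2 : 4 * max R₀ 1 / r < 2 ^ j := lt_of_lt_of_le hn h1
    rw [div_lt_iff₀ hr0] at h2
    linarith
  set Rj : ℝ := 2 ^ j * r / 4 with hRjdef
  have hmax1 : (1:ℝ) ≤ max R₀ 1 := le_max_right _ _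
  have hRj1 : 1 ≤ Rj := by rw [hRjdef]; linarith
  have hRjpos : 0 < Rj := by linarith
  -- LHS ≤ T Rj
  have hxnorm : ‖x - x₀‖ < r / 2 := mem_ball_iff_norm.mp hx
  have hsub : {z : E | 2 ^ j * r ≤ ‖z - x₀‖} ⊆ (fun z => z - x) ⁻¹' {u : E | Rj < ‖u‖} := by
    intro z hz
    simp only [Set.mem_setOf_eq] at hz
    simp only [Set.mem_preimage, Set.mem_setOf_eq]
    have h1 : ‖z - x₀‖ ≤ ‖z - x‖ + ‖x - x₀‖ := norm_sub_le_norm_sub_add_norm_sub z x x₀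
    have h3 : 2 ^ j * r - r/2 < ‖z - x‖ := by linarith
    have h4 : r ≤ 2 ^ j * r := by nlinarith
    have h2 : Rj < 2 ^ j * r - r/2 := by
      rw [hRjdef]; linarith
    linarith
  have hIntB : IntegrableOn (fun z : E => γ ‖z - x‖) ((fun z => z - x) ⁻¹' {u : E | Rj < ‖u‖})
      volume := by
    have := ((measurePreserving_sub_right volume x).integrableOn_comp_preimage
      (MeasurableEquiv.subRight x).measurableEmbedding (s := {u : E | Rj < ‖u‖})
      (f := f)).mpr (hIntLt Rj hRjpos)
    exact this
  have hLHS1 : (∫ z in {z : E | 2 ^ j * r ≤ ‖z - x₀‖}, γ ‖z - x‖) ≤ T Rj := by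
    have hmB : MeasurableSet ((fun z : E => z - x) ⁻¹' {u : E | Rj < ‖u‖}) :=
      (measurable_sub_const x) (msLt Rj)
    have h1 : (∫ z in {z : E | 2 ^ j * r ≤ ‖z - x₀‖}, γ ‖z - x‖) ≤
        ∫ z in (fun z : E => z - x) ⁻¹' {u : E | Rj < ‖u‖}, γ ‖z - x‖ := by
      refine setIntegral_mono_set hIntB ?_ (HasSubset.Subset.eventuallyLE hsub)
      refine ae_restrict_of_forall_mem hmB (fun z hz => ?_)
      simp only [Set.mem_preimage, Set.mem_setOf_eq] at hz
      exact hγnn _ (lt_trans hRjpos hz)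
    have h2 : (∫ z in (fun z : E => z - x) ⁻¹' {u : E | Rj < ‖u‖}, γ ‖z - x‖) = T Rj :=
      htrans x {u : E | Rj < ‖u‖}
    linarith
  -- T Rj ≤ 2 * Rj ^ (-σ₁)
  have hTRj : T Rj ≤ 2 * Rj ^ (-σ₁) := by
    have h1 : Rj ^ σ₁ * T Rj ≤ 1 + 1 := hR₀ Rj (le_of_lt (lt_of_le_of_lt (le_max_left _ _) hRj))
    have h2 : (0:ℝ) < Rj ^ σ₁ := Real.rpow_pos_of_pos hRjpos _
    have h3 : T Rj ≤ 2 / Rj ^ σ₁ := by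
      rw [le_div_iff₀ h2]; linarith
    rw [Real.rpow_neg hRjpos.le, ← div_eq_mul_inv]
    exact h3
  -- Rj^(-σ₁) = 2^(-(σ₁ j)) * (r/4)^(-σ₁)
  set a : ℝ := (2:ℝ) ^ (-(σ₁ * (j:ℝ))) with hadef
  have hapos : 0 < a := Real.rpow_pos_of_pos two_pos _
  have hsplit : Rj ^ (-σ₁) = a * (r/4) ^ (-σ₁) := by
    have h1 : Rj = (2:ℝ) ^ j * (r/4) := by rw [hRjdef]; ring
    rw [h1, Real.mul_rpow (by positivity) (by positivity), hadef]
    congr 1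
    rw [← Real.rpow_natCast 2 j, ← Real.rpow_mul (by norm_num)]
    congr 1
    ring
  have hr4pos : (0:ℝ) < r/4 := by linarith
  -- case split on r vs δ₀
  rw [hRHS x₀ r]
  have hT'r : 0 ≤ T' r := hT'nn r hr0
  rcases lt_or_ge r δ₀ with hrδ | hrδ
  · -- small r : use hliminf bound
    have hlow := hδ₀low r hr0 hrδ
    have hσ₂pos : (0:ℝ) < r ^ σ₂ := Real.rpow_pos_of_pos hr0 _
    have h1 : r ^ (-σ₂) ≤ 2 * T r := by
      rw [Real.rpow_neg hr0.le, inv_le_iff_one_le_mul₀ hσ₂pos]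
      nlinarith
    have h2 : r ^ (-σ₁) ≤ r ^ (-σ₂) :=
      Real.rpow_le_rpow_of_exponent_ge hr0 hr1.le (by linarith)
    have h4pos : (0:ℝ) < (4:ℝ) ^ σ₁ := Real.rpow_pos_of_pos (by norm_num) _
    have hrσpos : (0:ℝ) < r ^ σ₁ := Real.rpow_pos_of_pos hr0 _
    have h3 : (r/4) ^ (-σ₁) = 4 ^ σ₁ * r ^ (-σ₁) := by
      rw [Real.rpow_neg (by positivity), Real.div_rpow hr0.le (by norm_num),
        Real.rpow_neg hr0.le]
      rw [inv_div]
      field_simp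
    have hTr : T r ≤ T' r := hTT' r hr0
    calc (∫ z in {z : E | 2 ^ j * r ≤ ‖z - x₀‖}, γ ‖z - x‖)
        ≤ 2 * Rj ^ (-σ₁) := le_trans hLHS1 hTRj
      _ = 2 * a * ((4:ℝ) ^ σ₁ * r ^ (-σ₁)) := by rw [hsplit, h3]; ring
      _ ≤ 2 * a * ((4:ℝ) ^ σ₁ * (2 * T' r)) := by
          have hA : r ^ (-σ₁) ≤ 2 * T' r := by linarith
          have hB := mul_le_mul_of_nonneg_left hA h4pos.le
          exact mul_le_mul_of_nonneg_left hB (by positivity)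
      _ = (4 * (4:ℝ) ^ σ₁) * (a * T' r) := by ring
      _ ≤ c * (a * T' r) :=
          mul_le_mul_of_nonneg_right hcB (mul_nonneg hapos.le hT'r)
      _ = c * a * T' r := by ring
  · -- large r : case on S
    by_cases hS : 0 < S
    · have hcS : 2*(δ₀/4) ^ (-σ₁)/S ≤ c := by
        rw [hcdef]
        exact le_trans (le_of_eq (if_pos hS).symm) (le_max_right _ _)
      have hST'r : S ≤ T' r := by
        refine setIntegral_mono_set (hIntLe r hr0) (hnnLe r hr0)
          (HasSubset.Subset.eventuallyLE (fun u hu => ?_))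
        simp only [Set.mem_setOf_eq] at *
        linarith
      have hmono : (r/4) ^ (-σ₁) ≤ (δ₀/4) ^ (-σ₁) :=
        Real.rpow_le_rpow_of_nonpos (by linarith) (by linarith) (by linarith)
      have hδ4pos : (0:ℝ) < (δ₀/4) ^ (-σ₁) := Real.rpow_pos_of_pos (by linarith) _
      calc (∫ z in {z : E | 2 ^ j * r ≤ ‖z - x₀‖}, γ ‖z - x‖)
          ≤ 2 * Rj ^ (-σ₁) := le_trans hLHS1 hTRj
        _ = 2 * a * (r/4) ^ (-σ₁) := by rw [hsplit]; ring
        _ ≤ 2 * a * (δ₀/4) ^ (-σ₁) := by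
            exact mul_le_mul_of_nonneg_left hmono (by positivity)
        _ = (2 * (δ₀/4) ^ (-σ₁) / S) * a * S := by
            field_simp
        _ ≤ c * a * T' r := by
            have h1 : (2 * (δ₀/4) ^ (-σ₁) / S) * a * S ≤ c * a * S := by
              have := mul_le_mul_of_nonneg_right (mul_le_mul_of_nonneg_right hcS hapos.le) hS.le
              linarith
            have h2 : c * a * S ≤ c * a * T' r :=
              mul_le_mul_of_nonneg_left hST'r (by positivity)
            linarith
    · -- S = 0
      have hSnn : 0 ≤ S := hT'nn 1 one_pos
      have hS0 : S = 0 := le_antisymm (not_lt.mp hS) hSnn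
      have hTjS : T Rj ≤ S := by
        refine setIntegral_mono_set (hIntLe 1 one_pos) (hnnLe 1 one_pos)
          (HasSubset.Subset.eventuallyLE (fun u hu => ?_))
        simp only [Set.mem_setOf_eq] at *
        linarith
      have : (∫ z in {z : E | 2 ^ j * r ≤ ‖z - x₀‖}, γ ‖z - x‖) ≤ 0 := by
        rw [← hS0]; exact le_trans hLHS1 hTjS
      have hfinal : 0 ≤ c * a * T' r := by positivity
      linarith
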